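/- arXiv:0911.1684 — 2 statements merged into one kernel-verified Lean document; each statement's English description precedes it below -/
import Mathlib

section
/- (Risk decomposition) Suppose for each k ∈ ℤ one observes c̃_k = θ_k γ̃_k + (ε/√n) ξ_k where θ_k ∈ ℂ with ∑_k |θ_k|² < ∞, γ̃_k = (1/n)∑_{j=1}^n e^{-2πik τ_j} with τ_j i.i.d., γ_k = E[e^{-2πikτ₁}] ≠ 0, and the ξ_k are complex random variables independent of the τ_j with E[ξ_k] = 0 and E[|ξ_k|²] = 1. For a nonrandom real filter λ = (λ_k) define θ̂_k = λ_k c̃_k / γ_k. Then E ∑_k |θ̂_k - θ_k|² = ∑_k (λ_k - 1)² |θ_k|² + (ε²/n) ∑_k λ_k²/|γ_k|² + (1/n) ∑_k λ_k² |θ_k|² (1/|γ_k|² - 1). -/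
open MeasureTheory ProbabilityTheory Real

section Aux
variable {Ω : Type*} [MeasurableSpace Ω] {μ : Measure Ω}

lemma integral_re'' {f : Ω → ℂ} (hf : Integrable f μ) :
    ∫ ω, (f ω).re ∂μ = (∫ ω, f ω ∂μ).re := by
  have := integral_re (𝕜 := ℂ) hf
  simpa using this

lemma Integrable.conj_cplx {f : Ω → ℂ} (hf : Integrable f μ) :
    Integrable (fun ω => (starRingEnd ℂ) (f ω)) μ := by
  refine ⟨Complex.continuous_conj.comp_aestronglyMeasurable hf.1, ?_⟩
  simpa [HasFiniteIntegral] using hf.2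

lemma Integrable.re_cplx {f : Ω → ℂ} (hf : Integrable f μ) :
    Integrable (fun ω => (f ω).re) μ := hf.re

lemma integrable_of_bounded [IsProbabilityMeasure μ] {g : Ω → ℂ} (C : ℝ)
    (hm : AEStronglyMeasurable g μ) (h : ∀ ω, ‖g ω‖ ≤ C) : Integrable g μ :=
  Integrable.mono' (integrable_const C) hm (Filter.Eventually.of_forall h)

lemma indep_integral_mul_complex [IsProbabilityMeasure μ] {X Y : Ω → ℂ}
    (hXY : IndepFun X Y μ) (hX : Integrable X μ) (hY : Integrable Y μ) :
    ∫ ω, X ω * Y ω ∂μ = (∫ ω, X ω ∂μ) * ∫ ω, Y ω ∂μ := by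
  have hmul : Integrable (fun ω => X ω * Y ω) μ := hXY.integrable_mul hX hY
  have hrr : ∫ ω, (X ω).re * (Y ω).re ∂μ = (∫ ω, (X ω).re ∂μ) * ∫ ω, (Y ω).re ∂μ :=
    (hXY.comp Complex.measurable_re Complex.measurable_re).integral_fun_mul_eq_mul_integral hX.re.aestronglyMeasurable hY.re.aestronglyMeasurable
  have hri : ∫ ω, (X ω).re * (Y ω).im ∂μ = (∫ ω, (X ω).re ∂μ) * ∫ ω, (Y ω).im ∂μ :=
    (hXY.comp Complex.measurable_re Complex.measurable_im).integral_fun_mul_eq_mul_integral hX.re.aestronglyMeasurable hY.im.aestronglyMeasurable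
  have hir : ∫ ω, (X ω).im * (Y ω).re ∂μ = (∫ ω, (X ω).im ∂μ) * ∫ ω, (Y ω).re ∂μ :=
    (hXY.comp Complex.measurable_im Complex.measurable_re).integral_fun_mul_eq_mul_integral hX.im.aestronglyMeasurable hY.re.aestronglyMeasurable
  have hii : ∫ ω, (X ω).im * (Y ω).im ∂μ = (∫ ω, (X ω).im ∂μ) * ∫ ω, (Y ω).im ∂μ :=
    (hXY.comp Complex.measurable_im Complex.measurable_im).integral_fun_mul_eq_mul_integral hX.im.aestronglyMeasurable hY.im.aestronglyMeasurable
  have h1 : Integrable (fun ω => (X ω).re * (Y ω).re) μ :=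
    (hXY.comp Complex.measurable_re Complex.measurable_re).integrable_mul hX.re hY.re
  have h2 : Integrable (fun ω => (X ω).re * (Y ω).im) μ :=
    (hXY.comp Complex.measurable_re Complex.measurable_im).integrable_mul hX.re hY.im
  have h3 : Integrable (fun ω => (X ω).im * (Y ω).re) μ :=
    (hXY.comp Complex.measurable_im Complex.measurable_re).integrable_mul hX.im hY.re
  have h4 : Integrable (fun ω => (X ω).im * (Y ω).im) μ :=
    (hXY.comp Complex.measurable_im Complex.measurable_im).integrable_mul hX.im hY.im
  have hre := integral_re (𝕜 := ℂ) hmul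
  have him := integral_im (𝕜 := ℂ) hmul
  have hreX := integral_re (𝕜 := ℂ) hX
  have himX := integral_im (𝕜 := ℂ) hX
  have hreY := integral_re (𝕜 := ℂ) hY
  have himY := integral_im (𝕜 := ℂ) hY
  simp only [RCLike.re_to_complex, RCLike.im_to_complex] at hre him hreX himX hreY himY
  apply Complex.ext
  · rw [← hre]
    simp only [Complex.mul_re]
    rw [integral_sub h1 h4, hrr, hii, hreX, hreY, himX, himY]
  · rw [← him]
    simp only [Complex.mul_im]
    rw [integral_add h2 h3, hri, hir, hreX, hreY, himX, himY]

lemma expand_sq [IsProbabilityMeasure μ] {U Z : Ω → ℂ} (cst : ℂ)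
    (hU : Integrable U μ) (hZ : Integrable Z μ)
    (hU2 : Integrable (fun ω => Complex.normSq (U ω)) μ)
    (hZ2 : Integrable (fun ω => Complex.normSq (Z ω)) μ)
    (hUZ : Integrable (fun ω => U ω * (starRingEnd ℂ) (Z ω)) μ)
    (hUm : ∫ ω, U ω ∂μ = 0) (hZm : ∫ ω, Z ω ∂μ = 0)
    (hUZm : ∫ ω, U ω * (starRingEnd ℂ) (Z ω) ∂μ = 0) :
    Integrable (fun ω => Complex.normSq (U ω + cst + Z ω)) μ ∧
    ∫ ω, Complex.normSq (U ω + cst + Z ω) ∂μ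
      = (∫ ω, Complex.normSq (U ω) ∂μ) + Complex.normSq cst
        + ∫ ω, Complex.normSq (Z ω) ∂μ := by
  have key : ∀ ω, Complex.normSq (U ω + cst + Z ω)
      = (Complex.normSq (U ω) + Complex.normSq cst + Complex.normSq (Z ω))
        + (2 * (U ω * (starRingEnd ℂ) cst).re + 2 * (U ω * (starRingEnd ℂ) (Z ω)).re
          + 2 * (cst * (starRingEnd ℂ) (Z ω)).re) := by
    intro ω
    rw [Complex.normSq_add (U ω + cst) (Z ω), Complex.normSq_add (U ω) cst, add_mul,
      Complex.add_re]
    ring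
  have hUc : Integrable (fun ω => U ω * (starRingEnd ℂ) cst) μ := hU.mul_const _
  have hcZ : Integrable (fun ω => cst * (starRingEnd ℂ) (Z ω)) μ := (Integrable.conj_cplx hZ).const_mul _
  have I1 : Integrable (fun ω => Complex.normSq (U ω) + Complex.normSq cst
      + Complex.normSq (Z ω)) μ := (hU2.add (integrable_const _)).add hZ2
  have I2 : Integrable (fun ω => 2 * (U ω * (starRingEnd ℂ) cst).re
      + 2 * (U ω * (starRingEnd ℂ) (Z ω)).re + 2 * (cst * (starRingEnd ℂ) (Z ω)).re) μ :=
    ((hUc.re.const_mul 2).add (hUZ.re.const_mul 2)).add (hcZ.re.const_mul 2)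
  constructor
  · exact (I1.add I2).congr (Filter.Eventually.of_forall fun ω => (key ω).symm)
  have e1 : ∫ ω, (U ω * (starRingEnd ℂ) cst).re ∂μ = 0 := by
    rw [integral_re'' hUc, integral_mul_const, hUm, zero_mul, Complex.zero_re]
  have e2 : ∫ ω, (U ω * (starRingEnd ℂ) (Z ω)).re ∂μ = 0 := by
    rw [integral_re'' hUZ, hUZm, Complex.zero_re]
  have e3 : ∫ ω, (cst * (starRingEnd ℂ) (Z ω)).re ∂μ = 0 := by
    rw [integral_re'' hcZ, integral_const_mul, integral_conj, hZm, map_zero, mul_zero,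
      Complex.zero_re]
  calc ∫ ω, Complex.normSq (U ω + cst + Z ω) ∂μ
      = ∫ ω, ((Complex.normSq (U ω) + Complex.normSq cst + Complex.normSq (Z ω))
        + (2 * (U ω * (starRingEnd ℂ) cst).re + 2 * (U ω * (starRingEnd ℂ) (Z ω)).re
          + 2 * (cst * (starRingEnd ℂ) (Z ω)).re)) ∂μ := by simp_rw [key]
    _ = (∫ ω, Complex.normSq (U ω) ∂μ) + Complex.normSq cst
        + ∫ ω, Complex.normSq (Z ω) ∂μ := by
        have J1 : ∫ ω, (Complex.normSq (U ω) + Complex.normSq cst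
            + Complex.normSq (Z ω)) ∂μ
            = (∫ ω, Complex.normSq (U ω) ∂μ) + Complex.normSq cst
              + ∫ ω, Complex.normSq (Z ω) ∂μ := by
          rw [integral_add (f := fun ω => Complex.normSq (U ω) + Complex.normSq cst)
              (g := fun ω => Complex.normSq (Z ω))
              (hU2.add (integrable_const (Complex.normSq cst))) hZ2,
            integral_add (f := fun ω => Complex.normSq (U ω))
              (g := fun _ => Complex.normSq cst) hU2
              (integrable_const (Complex.normSq cst)), integral_const]
          simp
        have J2 : ∫ ω, (2 * (U ω * (starRingEnd ℂ) cst).re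
            + 2 * (U ω * (starRingEnd ℂ) (Z ω)).re
            + 2 * (cst * (starRingEnd ℂ) (Z ω)).re) ∂μ = 0 := by
          rw [integral_add
              (f := fun ω => 2 * (U ω * (starRingEnd ℂ) cst).re
                + 2 * (U ω * (starRingEnd ℂ) (Z ω)).re)
              (g := fun ω => 2 * (cst * (starRingEnd ℂ) (Z ω)).re)
              ((hUc.re.const_mul 2).add (hUZ.re.const_mul 2)) (hcZ.re.const_mul 2),
            integral_add (f := fun ω => 2 * (U ω * (starRingEnd ℂ) cst).re)
              (g := fun ω => 2 * (U ω * (starRingEnd ℂ) (Z ω)).re)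
              (hUc.re.const_mul 2) (hUZ.re.const_mul 2),
            integral_const_mul, integral_const_mul, integral_const_mul, e1, e2, e3]
          ring
        rw [integral_add (f := fun ω => Complex.normSq (U ω) + Complex.normSq cst
            + Complex.normSq (Z ω))
            (g := fun ω => 2 * (U ω * (starRingEnd ℂ) cst).re
              + 2 * (U ω * (starRingEnd ℂ) (Z ω)).re
              + 2 * (cst * (starRingEnd ℂ) (Z ω)).re) I1 I2, J1, J2, add_zero]

end Aux

/-- Bias-variance decomposition of the risk of a linear (filtered) estimator in the
randomly shifted curves sequence model (Lemma 1 of the paper). -/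
theorem risk_decomposition
    {Ω : Type*} [MeasurableSpace Ω] (μ : Measure Ω) [IsProbabilityMeasure μ]
    (n : ℕ) (hn : 1 ≤ n) (ε : ℝ) (hε : 0 < ε)
    (τ : Fin n → Ω → ℝ)
    (hmeas : ∀ j, Measurable (τ j))
    (hindep : iIndepFun τ μ)
    (hident : ∀ j, IdentDistrib (τ j) (τ ⟨0, hn⟩) μ μ)
    (θ : ℤ → ℂ) (hθ : Summable fun k => ‖θ k‖ ^ 2)
    (γ : ℤ → ℂ) (hγ0 : ∀ k, γ k ≠ 0)
    (hγ : ∀ k : ℤ, γ k = ∫ ω, Complex.exp (-(2 * π * Complex.I * k * τ ⟨0, hn⟩ ω)) ∂μ)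
    (γt : ℤ → Ω → ℂ)
    (hγt : ∀ k ω, γt k ω = (n : ℂ)⁻¹ * ∑ j, Complex.exp (-(2 * π * Complex.I * k * τ j ω)))
    (ξ : ℤ → Ω → ℂ)
    (hξmeas : ∀ k, Measurable (ξ k))
    (hξ_mean : ∀ k, (∫ ω, ξ k ω ∂μ) = 0)
    (hξ_var : ∀ k, (∫ ω, ‖ξ k ω‖ ^ 2 ∂μ) = 1)
    (hξ_indep : ∀ k, IndepFun (γt k) (ξ k) μ)
    (c : ℤ → Ω → ℂ)
    (hc : ∀ k ω, c k ω = θ k * γt k ω + (ε / Real.sqrt n) * ξ k ω)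
    (lam : ℤ → ℝ) (hlam : (Function.support lam).Finite)
    (θhat : ℤ → Ω → ℂ)
    (hθhat : ∀ k ω, θhat k ω = (lam k : ℂ) * c k ω / γ k) :
    (∫ ω, ∑' k : ℤ, ‖θhat k ω - θ k‖ ^ 2 ∂μ)
      = (∑' k : ℤ, (lam k - 1) ^ 2 * ‖θ k‖ ^ 2)
        + (ε ^ 2 / n) * ∑' k : ℤ, (lam k) ^ 2 / ‖γ k‖ ^ 2
        + (1 / n) * ∑' k : ℤ, (lam k) ^ 2 * ‖θ k‖ ^ 2 * (1 / ‖γ k‖ ^ 2 - 1) := by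
  have hn0 : (n : ℝ) ≠ 0 := by positivity
  -- per-coefficient risk and integrability
  have perk : ∀ k : ℤ,
      Integrable (fun ω => ‖θhat k ω - θ k‖ ^ 2) μ ∧
      ∫ ω, ‖θhat k ω - θ k‖ ^ 2 ∂μ
        = (lam k - 1) ^ 2 * ‖θ k‖ ^ 2 + ε ^ 2 / n * ((lam k) ^ 2 / ‖γ k‖ ^ 2)
          + 1 / n * ((lam k) ^ 2 * ‖θ k‖ ^ 2 * (1 / ‖γ k‖ ^ 2 - 1)) := by
    intro k
    set q : ℝ := Complex.normSq (γ k) with hqdef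
    have hq0 : q ≠ 0 := fun h => hγ0 k (Complex.normSq_eq_zero.1 h)
    set u : ℝ → ℂ := fun t => Complex.exp (-(2 * π * Complex.I * k * t)) with hudef
    have hu_meas : Measurable u := by
      apply Complex.measurable_exp.comp
      exact (Complex.measurable_ofReal.const_mul _).neg
    have hu_norm : ∀ t, ‖u t‖ = 1 := by
      intro t
      rw [hudef]
      simp only [Complex.norm_exp]
      norm_num [Complex.mul_re, Complex.mul_im]
    have hu_normSq : ∀ t, Complex.normSq (u t) = 1 := by
      intro t
      rw [Complex.normSq_eq_norm_sq, hu_norm t, one_pow]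
    have hEmeas : ∀ j, Measurable fun ω => u (τ j ω) := fun j => hu_meas.comp (hmeas j)
    have hEint : ∀ j, Integrable (fun ω => u (τ j ω)) μ := fun j =>
      integrable_of_bounded 1 (hEmeas j).aestronglyMeasurable fun ω => (hu_norm _).le
    have hEid : ∀ j, ∫ ω, u (τ j ω) ∂μ = γ k := by
      intro j
      rw [hγ k]
      exact ((hident j).comp hu_meas).integral_eq
    -- products of the exponentials
    have hprod_int : ∀ j l : Fin n,
        Integrable (fun ω => u (τ j ω) * (starRingEnd ℂ) (u (τ l ω))) μ := by
      intro j l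
      refine integrable_of_bounded 1
        (((hEmeas j).mul (Complex.continuous_conj.measurable.comp (hEmeas l))).aestronglyMeasurable)
        fun ω => ?_
      rw [norm_mul, hu_norm, RCLike.norm_conj, hu_norm, one_mul]
    have hprod_val : ∀ j l : Fin n, j ≠ l →
        ∫ ω, u (τ j ω) * (starRingEnd ℂ) (u (τ l ω)) ∂μ = γ k * (starRingEnd ℂ) (γ k) := by
      intro j l hjl
      have hind : IndepFun (fun ω => u (τ j ω)) (fun ω => (starRingEnd ℂ) (u (τ l ω))) μ :=
        (hindep.indepFun hjl).comp hu_meas (Complex.continuous_conj.measurable.comp hu_meas)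
      rw [indep_integral_mul_complex hind (hEint j) (Integrable.conj_cplx (hEint l)), hEid j,
        integral_conj, hEid l]
    -- mean of the empirical characteristic function
    have hgmeas : Measurable (γt k) := by
      have : γt k = fun ω => (n : ℂ)⁻¹ * ∑ j, u (τ j ω) := funext fun ω => hγt k ω
      rw [this]
      exact (Finset.measurable_sum _ fun j _ => hEmeas j).const_mul _
    have hgnorm : ∀ ω, ‖γt k ω‖ ≤ 1 := by
      intro ω
      rw [hγt k ω, norm_mul]
      have h1 : ‖((n : ℂ))⁻¹‖ = (n : ℝ)⁻¹ := by simp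
      have h2 : ‖∑ j, u (τ j ω)‖ ≤ (n : ℝ) := by
        refine (norm_sum_le _ _).trans ?_
        simp [hu_norm]
      calc ‖((n : ℂ))⁻¹‖ * ‖∑ j, u (τ j ω)‖ ≤ (n : ℝ)⁻¹ * n := by
            rw [h1]
            gcongr
          _ = 1 := by field_simp
    have hgint : Integrable (γt k) μ :=
      integrable_of_bounded 1 hgmeas.aestronglyMeasurable hgnorm
    have hgmean : ∫ ω, γt k ω ∂μ = γ k := by
      have : ∀ ω, γt k ω = (n : ℂ)⁻¹ * ∑ j, u (τ j ω) := hγt k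
      simp_rw [this]
      rw [integral_const_mul, integral_finset_sum _ fun j _ => hEint j]
      simp_rw [hEid]
      rw [Finset.sum_const, Finset.card_univ, Fintype.card_fin, nsmul_eq_mul]
      rw [← mul_assoc, inv_mul_cancel₀ (by exact_mod_cast hn0), one_mul]
    -- second moment of the empirical characteristic function
    have hg2 : ∫ ω, Complex.normSq (γt k ω) ∂μ = (1 + ((n : ℝ) - 1) * q) / n := by
      have hpt : ∀ ω, Complex.normSq (γt k ω)
          = (n : ℝ)⁻¹ * (n : ℝ)⁻¹ *
            ∑ j, ∑ l, (u (τ j ω) * (starRingEnd ℂ) (u (τ l ω))).re := by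
        intro ω
        rw [hγt k ω, Complex.normSq_mul]
        have h1 : Complex.normSq ((n : ℂ))⁻¹ = (n : ℝ)⁻¹ * (n : ℝ)⁻¹ := by
          rw [Complex.normSq_inv]
          norm_num [Complex.normSq_apply]
        have h2 : Complex.normSq (∑ j, u (τ j ω))
            = ∑ j, ∑ l, (u (τ j ω) * (starRingEnd ℂ) (u (τ l ω))).re := by
          have hm : (∑ j, u (τ j ω)) * (starRingEnd ℂ) (∑ l, u (τ l ω))
              = ∑ j, ∑ l, u (τ j ω) * (starRingEnd ℂ) (u (τ l ω)) := by
            rw [map_sum, Finset.sum_mul_sum]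
          have := Complex.mul_conj (∑ j, u (τ j ω))
          calc Complex.normSq (∑ j, u (τ j ω))
              = ((Complex.normSq (∑ j, u (τ j ω)) : ℂ)).re := by simp
            _ = ((∑ j, u (τ j ω)) * (starRingEnd ℂ) (∑ l, u (τ l ω))).re := by rw [this]
            _ = _ := by rw [hm]; simp [Complex.re_sum]
        rw [h1, h2, mul_assoc]
      simp_rw [hpt]
      rw [integral_const_mul,
        integral_finset_sum _ fun j _ => integrable_finset_sum _ fun l _ =>
          Integrable.re_cplx (hprod_int j l)]
      have hval : ∀ j : Fin n, ∑ l, ∫ ω, (u (τ j ω) * (starRingEnd ℂ) (u (τ l ω))).re ∂μ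
          = q * n + (1 - q) := by
        intro j
        have hterm : ∀ l, ∫ ω, (u (τ j ω) * (starRingEnd ℂ) (u (τ l ω))).re ∂μ
            = if j = l then (1 : ℝ) else q := by
          intro l
          by_cases hjl : j = l
          · subst hjl
            simp only [if_pos rfl]
            have : ∀ ω, (u (τ j ω) * (starRingEnd ℂ) (u (τ j ω))).re = 1 := by
              intro ω
              rw [Complex.mul_conj, hu_normSq]
              simp
            simp_rw [this]
            simp
          · rw [if_neg hjl, integral_re'' (hprod_int j l), hprod_val j l hjl,
              Complex.mul_conj]
            simp [hqdef]
        simp_rw [hterm]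
        have : ∀ l : Fin n, (if j = l then (1 : ℝ) else q)
            = q + (if j = l then 1 - q else 0) := by
          intro l
          by_cases h : j = l <;> simp [h]
        simp_rw [this]
        rw [Finset.sum_add_distrib, Finset.sum_const, Finset.card_univ, Fintype.card_fin,
          Finset.sum_ite_eq]
        simp [nsmul_eq_mul, mul_comm]
      have hswap : ∀ j : Fin n, ∫ ω, (∑ l, (u (τ j ω) * (starRingEnd ℂ) (u (τ l ω))).re) ∂μ
          = q * n + (1 - q) := by
        intro j
        rw [integral_finset_sum _ fun l _ => Integrable.re_cplx (hprod_int j l), hval j]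
      rw [Finset.sum_congr rfl fun j _ => hswap j]
      rw [Finset.sum_const, Finset.card_univ, Fintype.card_fin, nsmul_eq_mul]
      field_simp
      ring
    have hgnormSq_int : Integrable (fun ω => Complex.normSq (γt k ω)) μ := by
      refine Integrable.mono' (integrable_const 1)
        ((Complex.continuous_normSq.measurable.comp hgmeas).aestronglyMeasurable)
        (Filter.Eventually.of_forall fun ω => ?_)
      rw [Real.norm_eq_abs, abs_of_nonneg (Complex.normSq_nonneg _), Complex.normSq_eq_norm_sq]
      have h := hgnorm ω
      have h0 := norm_nonneg (γt k ω)
      nlinarith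
    -- variance of the empirical characteristic function
    have hvar : ∫ ω, Complex.normSq (γt k ω - γ k) ∂μ = (1 - q) / n := by
      have hpt : ∀ ω, Complex.normSq (γt k ω - γ k)
          = Complex.normSq (γt k ω) + q - 2 * (γt k ω * (starRingEnd ℂ) (γ k)).re := by
        intro ω
        rw [Complex.normSq_sub]
      simp_rw [hpt]
      have hBint : Integrable (fun ω => 2 * (γt k ω * (starRingEnd ℂ) (γ k)).re) μ :=
        (Integrable.re_cplx (hgint.mul_const _)).const_mul 2
      rw [integral_sub (f := fun ω => Complex.normSq (γt k ω) + q)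
          (g := fun ω => 2 * (γt k ω * (starRingEnd ℂ) (γ k)).re)
          (hgnormSq_int.add (integrable_const q)) hBint,
        integral_add (f := fun ω => Complex.normSq (γt k ω)) (g := fun _ => q)
          hgnormSq_int (integrable_const q),
        integral_const, integral_const_mul, integral_re'' (hgint.mul_const _),
        integral_mul_const, hgmean, Complex.mul_conj, hg2]
      simp only [measure_univ, probReal_univ, ENNReal.toReal_one, one_smul, Complex.ofReal_re]
      rw [← hqdef]
      field_simp
      ring
    -- integrability of ξ
    have hξ2int : Integrable (fun ω => Complex.normSq (ξ k ω)) μ := by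
      have h' : Integrable (fun ω => ‖ξ k ω‖ ^ 2) μ := by
        by_contra h
        have hv := hξ_var k
        rw [integral_undef h] at hv
        exact zero_ne_one hv
      exact h'.congr (Filter.Eventually.of_forall fun ω =>
        (Complex.normSq_eq_norm_sq (ξ k ω)).symm)
    have hξ2val : ∫ ω, Complex.normSq (ξ k ω) ∂μ = 1 := by
      rw [← hξ_var k]
      exact integral_congr_ae (Filter.Eventually.of_forall fun ω =>
        Complex.normSq_eq_norm_sq (ξ k ω))
    have hξint : Integrable (ξ k) μ := by
      have hmem : MemLp (ξ k) 2 μ :=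
        (memLp_two_iff_integrable_sq_norm (hξmeas k).aestronglyMeasurable).2
          (hξ2int.congr (Filter.Eventually.of_forall fun ω =>
            Complex.normSq_eq_norm_sq (ξ k ω)))
      exact hmem.integrable (by norm_num)
    have hγnorm : ‖γ k‖ ≤ 1 := by
      rw [← hEid ⟨0, hn⟩]
      calc ‖∫ ω, u (τ ⟨0, hn⟩ ω) ∂μ‖ ≤ ∫ ω, ‖u (τ ⟨0, hn⟩ ω)‖ ∂μ :=
            norm_integral_le_integral_norm _
        _ = 1 := by simp [hu_norm]
    set a : ℂ := (lam k : ℂ) * θ k / γ k with hadef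
    set b : ℂ := (lam k : ℂ) * ((ε : ℂ) / (Real.sqrt n : ℂ)) / γ k with hbdef
    set cst : ℂ := ((lam k : ℂ) - 1) * θ k with hcstdef
    set U : Ω → ℂ := fun ω => a * (γt k ω - γ k) with hUdef
    set Zb : Ω → ℂ := fun ω => b * ξ k ω with hZdef
    have hpoint : ∀ ω, θhat k ω - θ k = U ω + cst + Zb ω := by
      intro ω
      simp only [hUdef, hZdef, hcstdef, hadef, hbdef]
      rw [hθhat k ω, hc k ω]
      have key : ∀ (L T G gg e z : ℂ), G ≠ 0 →
          L * (T * gg + e * z) / G - T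
            = L * T / G * (gg - G) + (L - 1) * T + L * e / G * z := by
        intro L T G gg e z h
        field_simp
        ring
      exact key _ _ _ _ _ _ (hγ0 k)
    have hUmeas : Measurable U := (hgmeas.sub measurable_const).const_mul a
    have hUint : Integrable U μ := (hgint.sub (integrable_const _)).const_mul a
    have hU2int : Integrable (fun ω => Complex.normSq (U ω)) μ := by
      refine Integrable.mono' (integrable_const (Complex.normSq a * 4))
        ((Complex.continuous_normSq.measurable.comp hUmeas).aestronglyMeasurable)
        (Filter.Eventually.of_forall fun ω => ?_)
      rw [Real.norm_eq_abs, abs_of_nonneg (Complex.normSq_nonneg _), hUdef]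
      simp only [Complex.normSq_mul]
      have h4 : Complex.normSq (γt k ω - γ k) ≤ 4 := by
        rw [Complex.normSq_eq_norm_sq]
        have : ‖γt k ω - γ k‖ ≤ 2 := by
          calc ‖γt k ω - γ k‖ ≤ ‖γt k ω‖ + ‖γ k‖ := norm_sub_le _ _
            _ ≤ 1 + 1 := add_le_add (hgnorm ω) hγnorm
            _ = 2 := by norm_num
        nlinarith [norm_nonneg (γt k ω - γ k)]
      have := Complex.normSq_nonneg a
      nlinarith
    have hUm : ∫ ω, U ω ∂μ = 0 := by
      simp only [hUdef]
      rw [integral_const_mul, integral_sub hgint (integrable_const _), hgmean, integral_const]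
      simp
    have hZbint : Integrable Zb μ := hξint.const_mul b
    have hZb2int : Integrable (fun ω => Complex.normSq (Zb ω)) μ := by
      simp only [hZdef, Complex.normSq_mul]
      exact hξ2int.const_mul _
    have hZm : ∫ ω, Zb ω ∂μ = 0 := by
      simp only [hZdef]
      rw [integral_const_mul, hξ_mean k, mul_zero]
    have hindUZ : IndepFun U (fun ω => (starRingEnd ℂ) (Zb ω)) μ := by
      have h1 : Measurable (fun z : ℂ => a * (z - γ k)) :=
        (measurable_id.sub_const _).const_mul _
      have h2 : Measurable (fun z : ℂ => (starRingEnd ℂ) (b * z)) :=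
        Complex.continuous_conj.measurable.comp (measurable_id.const_mul _)
      exact (hξ_indep k).comp h1 h2
    have hUZint : Integrable (fun ω => U ω * (starRingEnd ℂ) (Zb ω)) μ :=
      hindUZ.integrable_mul hUint (Integrable.conj_cplx hZbint)
    have hUZm : ∫ ω, U ω * (starRingEnd ℂ) (Zb ω) ∂μ = 0 := by
      rw [indep_integral_mul_complex hindUZ hUint (Integrable.conj_cplx hZbint), hUm, zero_mul]
    obtain ⟨hIF, hEF⟩ := expand_sq cst hUint hZbint hU2int hZb2int hUZint hUm hZm hUZm
    have hcongr : ∀ ω, ‖θhat k ω - θ k‖ ^ 2 = Complex.normSq (U ω + cst + Zb ω) := by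
      intro ω
      rw [← hpoint ω, Complex.normSq_eq_norm_sq]
    refine ⟨hIF.congr (Filter.Eventually.of_forall fun ω => (hcongr ω).symm), ?_⟩
    calc ∫ ω, ‖θhat k ω - θ k‖ ^ 2 ∂μ
        = ∫ ω, Complex.normSq (U ω + cst + Zb ω) ∂μ :=
          integral_congr_ae (Filter.Eventually.of_forall hcongr)
      _ = (∫ ω, Complex.normSq (U ω) ∂μ) + Complex.normSq cst
          + ∫ ω, Complex.normSq (Zb ω) ∂μ := hEF
      _ = (lam k - 1) ^ 2 * ‖θ k‖ ^ 2 + ε ^ 2 / n * ((lam k) ^ 2 / ‖γ k‖ ^ 2)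
          + 1 / n * ((lam k) ^ 2 * ‖θ k‖ ^ 2 * (1 / ‖γ k‖ ^ 2 - 1)) := by
        have hIU : ∫ ω, Complex.normSq (U ω) ∂μ = Complex.normSq a * ((1 - q) / n) := by
          simp only [hUdef, Complex.normSq_mul]
          rw [integral_const_mul, hvar]
        have hIZ : ∫ ω, Complex.normSq (Zb ω) ∂μ = Complex.normSq b := by
          simp only [hZdef, Complex.normSq_mul]
          rw [integral_const_mul, hξ2val, mul_one]
        have hθn : ‖θ k‖ ^ 2 = Complex.normSq (θ k) := (Complex.normSq_eq_norm_sq _).symm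
        have hγn : ‖γ k‖ ^ 2 = q := (Complex.normSq_eq_norm_sq _).symm
        have hna : Complex.normSq a = (lam k) ^ 2 * Complex.normSq (θ k) / q := by
          rw [hadef, Complex.normSq_div, Complex.normSq_mul, Complex.normSq_ofReal, ← hqdef]
          ring
        have hnb : Complex.normSq b = (lam k) ^ 2 * (ε ^ 2 / n) / q := by
          rw [hbdef, Complex.normSq_div, Complex.normSq_mul, Complex.normSq_div,
            Complex.normSq_ofReal, Complex.normSq_ofReal, Complex.normSq_ofReal, ← hqdef,
            Real.mul_self_sqrt (by positivity)]
          ring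
        have hncst : Complex.normSq cst = (lam k - 1) ^ 2 * Complex.normSq (θ k) := by
          rw [hcstdef, Complex.normSq_mul]
          have : ((lam k : ℂ) - 1) = ((lam k - 1 : ℝ) : ℂ) := by push_cast; ring
          rw [this, Complex.normSq_ofReal]
          ring
        rw [hIU, hIZ, hna, hnb, hncst, hθn, hγn]
        field_simp
        ring
  -- assembly
  classical
  set s : Finset ℤ := hlam.toFinset with hsdef
  have hs : ∀ k ∉ s, lam k = 0 := by
    intro k hk
    by_contra h
    exact hk (hlam.mem_toFinset.2 h)
  have hFout : ∀ k ∉ s, ∀ ω : Ω, ‖θhat k ω - θ k‖ ^ 2 = ‖θ k‖ ^ 2 := by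
    intro k hk ω
    rw [hθhat k ω, hs k hk]
    simp
  set T : ℝ := ∑' (i : ↑((↑s : Set ℤ)ᶜ)), ‖θ (↑i : ℤ)‖ ^ 2 with hTdef
  have hsumm : ∀ ω : Ω, Summable fun k => ‖θhat k ω - θ k‖ ^ 2 := by
    intro ω
    have h1 : Summable fun k => ‖θhat k ω - θ k‖ ^ 2 - ‖θ k‖ ^ 2 :=
      summable_of_ne_finset_zero (s := s) fun k hk => by rw [hFout k hk ω]; ring
    exact (h1.add hθ).congr fun k => by ring
  have htsum : ∀ ω : Ω, (∑' k : ℤ, ‖θhat k ω - θ k‖ ^ 2)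
      = (∑ k ∈ s, ‖θhat k ω - θ k‖ ^ 2) + T := by
    intro ω
    rw [← Summable.sum_add_tsum_compl (s := s) (hsumm ω)]
    congr 1
    exact tsum_congr fun i => hFout (↑i) (fun hmem => i.2 (Finset.mem_coe.2 hmem)) ω
  have hLHS : (∫ ω, ∑' k : ℤ, ‖θhat k ω - θ k‖ ^ 2 ∂μ)
      = (∑ k ∈ s, ∫ ω, ‖θhat k ω - θ k‖ ^ 2 ∂μ) + T := by
    rw [integral_congr_ae (Filter.Eventually.of_forall htsum),
      integral_add (integrable_finset_sum s fun k _ => (perk k).1) (integrable_const T),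
      integral_finset_sum s fun k _ => (perk k).1, integral_const]
    simp
  have hT1 : (∑' k : ℤ, (lam k - 1) ^ 2 * ‖θ k‖ ^ 2)
      = (∑ k ∈ s, (lam k - 1) ^ 2 * ‖θ k‖ ^ 2) + T := by
    have hsum1 : Summable fun k => (lam k - 1) ^ 2 * ‖θ k‖ ^ 2 := by
      have h1 : Summable fun k => (lam k - 1) ^ 2 * ‖θ k‖ ^ 2 - ‖θ k‖ ^ 2 :=
        summable_of_ne_finset_zero (s := s) fun k hk => by rw [hs k hk]; ring
      exact (h1.add hθ).congr fun k => by ring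
    rw [← Summable.sum_add_tsum_compl (s := s) hsum1]
    congr 1
    exact tsum_congr fun i => by rw [hs (↑i) fun hmem => i.2 (Finset.mem_coe.2 hmem)]; ring
  have hT2 : (∑' k : ℤ, (lam k) ^ 2 / ‖γ k‖ ^ 2)
      = ∑ k ∈ s, (lam k) ^ 2 / ‖γ k‖ ^ 2 :=
    tsum_eq_sum fun k hk => by rw [hs k hk]; simp
  have hT3 : (∑' k : ℤ, (lam k) ^ 2 * ‖θ k‖ ^ 2 * (1 / ‖γ k‖ ^ 2 - 1))
      = ∑ k ∈ s, (lam k) ^ 2 * ‖θ k‖ ^ 2 * (1 / ‖γ k‖ ^ 2 - 1) :=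
    tsum_eq_sum fun k hk => by rw [hs k hk]; simp
  rw [hLHS, hT1, hT2, hT3, Finset.sum_congr rfl fun k _ => (perk k).2,
    Finset.sum_add_distrib, Finset.sum_add_distrib, Finset.mul_sum, Finset.mul_sum]
  ring
end

section
/- (Tail integral bound) Let τ₁,…,τₙ be i.i.d. real random variables, γ_k = E[e^{-2πikτ₁}], γ̃_k = (1/n)∑_j e^{-2πikτ_j}. There exists a constant C > 0 (independent of n, k, Q) such that for all Q > 0, E[(|γ̃_k - γ_k|² - Q) 1_{|γ̃_k - γ_k|² > Q}] ≤ (C/n) e^{-Qn/4}. -/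
open MeasureTheory ProbabilityTheory Real

set_option maxHeartbeats 1000000

lemma hoeff_ineq (p : ℝ) (hp0 : 0 ≤ p) (hp1 : p ≤ 1) (h : ℝ) :
    1 - p + p * Real.exp h ≤ Real.exp (p * h + h ^ 2 / 8) := by
  have hD : ∀ x : ℝ, 0 < 1 - p + p * Real.exp x := by
    intro x
    nlinarith [Real.exp_pos x, mul_nonneg hp0 (Real.exp_pos x).le,
      mul_nonneg (mul_nonneg hp0 (Real.exp_pos x).le) (Real.exp_pos x).le]
  set D : ℝ → ℝ := fun x => 1 - p + p * Real.exp x with hDdef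
  set f : ℝ → ℝ := fun x => p * x + x ^ 2 / 8 - Real.log (D x) with hfdef
  set f1 : ℝ → ℝ := fun x => p + x / 4 - p * Real.exp x / D x with hf1def
  have hderivD : ∀ x, HasDerivAt D (p * Real.exp x) x := fun x =>
    ((Real.hasDerivAt_exp x).const_mul p).const_add (1 - p)
  have hderivf : ∀ x, HasDerivAt f (f1 x) x := by
    intro x
    have h1 : HasDerivAt (fun y : ℝ => p * y + y ^ 2 / 8) (p + x / 4) x := by
      have := ((hasDerivAt_id x).const_mul p).add ((hasDerivAt_pow 2 x).div_const 8)
      refine this.congr_deriv ?_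
      simp; ring
    have h2 : HasDerivAt (fun y => Real.log (D y)) (p * Real.exp x / D x) x :=
      (hderivD x).log (hD x).ne'
    exact h1.sub h2
  have hderivf1 : ∀ x, HasDerivAt f1 (1 / 4 - p * Real.exp x * (1 - p) / (D x) ^ 2) x := by
    intro x
    have h1 : HasDerivAt (fun y : ℝ => p + y / 4) (1 / 4) x := by
      simpa using ((hasDerivAt_id x).div_const 4).const_add p
    have h2 : HasDerivAt (fun y => p * Real.exp y / D y)
        ((p * Real.exp x * D x - p * Real.exp x * (p * Real.exp x)) / (D x) ^ 2) x :=
      ((Real.hasDerivAt_exp x).const_mul p).div (hderivD x) (hD x).ne'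
    have := h1.sub h2
    refine this.congr_deriv ?_
    have : D x = 1 - p + p * Real.exp x := rfl
    rw [this]
    ring
  have hf1nonneg : ∀ x, 0 ≤ 1 / 4 - p * Real.exp x * (1 - p) / (D x) ^ 2 := by
    intro x
    rw [sub_nonneg, div_le_iff₀ (pow_pos (hD x) 2)]
    have : D x = 1 - p + p * Real.exp x := rfl
    nlinarith [sq_nonneg ((1 - p) - p * Real.exp x)]
  have hmono : Monotone f1 := by
    apply monotone_of_deriv_nonneg
    · exact fun x => (hderivf1 x).differentiableAt
    · intro x; rw [(hderivf1 x).deriv]; exact hf1nonneg x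
  have hf10 : f1 0 = 0 := by simp [hf1def, hDdef]
  have hf0 : f 0 = 0 := by simp [hfdef, hDdef]
  have hfnonneg : ∀ x, 0 ≤ f x := by
    intro x
    rcases lt_trichotomy x 0 with hx | hx | hx
    · obtain ⟨c, hc, hceq⟩ := exists_hasDerivAt_eq_slope f f1 hx
        (fun y _ => (hderivf y).continuousAt.continuousWithinAt)
        (fun y _ => hderivf y)
      have hc0 : f1 c ≤ 0 := hf10 ▸ hmono hc.2.le
      rw [hceq, hf0, div_le_iff₀ (by linarith : (0:ℝ) < 0 - x)] at hc0
      linarith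
    · rw [hx, hf0]
    · obtain ⟨c, hc, hceq⟩ := exists_hasDerivAt_eq_slope f f1 hx
        (fun y _ => (hderivf y).continuousAt.continuousWithinAt)
        (fun y _ => hderivf y)
      have hc0 : 0 ≤ f1 c := hf10 ▸ hmono hc.1.le
      rw [hceq, hf0, le_div_iff₀ (by linarith : (0:ℝ) < x - 0)] at hc0
      linarith
  have := hfnonneg h
  rw [hfdef] at this
  have hlog : Real.log (D h) ≤ p * h + h ^ 2 / 8 := by
    simpa [hfdef] using this
  calc 1 - p + p * Real.exp h = D h := rfl
    _ ≤ Real.exp (p * h + h ^ 2 / 8) := (Real.log_le_iff_le_exp (hD h)).1 hlog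



lemma integrable_of_bdd {Ω : Type} [MeasurableSpace Ω] {μ : Measure Ω} [IsProbabilityMeasure μ]
    {f : Ω → ℝ} (hf : Measurable f) (C : ℝ) (hC : ∀ ω, |f ω| ≤ C) : Integrable f μ :=
  (integrable_const C).mono' hf.aestronglyMeasurable
    (Filter.Eventually.of_forall (by simpa [Real.norm_eq_abs] using hC))

lemma hoeff_mgf {Ω : Type} [MeasurableSpace Ω] (μ : Measure Ω) [IsProbabilityMeasure μ]
    (Y : Ω → ℝ) (hY : Measurable Y) (a b : ℝ) (hab : a < b)
    (hbd : ∀ ω, Y ω ∈ Set.Icc a b) (hmean : ∫ ω, Y ω ∂μ = 0) (t : ℝ) :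
    ∫ ω, Real.exp (t * Y ω) ∂μ ≤ Real.exp (t ^ 2 * (b - a) ^ 2 / 8) := by
  have hba : (0:ℝ) < b - a := by linarith
  have hYbd : ∀ ω, |Y ω| ≤ |a| + |b| := by
    intro ω
    obtain ⟨h1, h2⟩ := hbd ω
    rw [abs_le]
    constructor <;> nlinarith [neg_abs_le a, le_abs_self b, abs_nonneg a, abs_nonneg b]
  have hYint : Integrable Y μ := integrable_of_bdd hY _ hYbd
  have ha0 : a ≤ 0 := by
    have h := integral_mono (μ := μ) (integrable_const a) hYint (fun ω => (hbd ω).1)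
    simpa [hmean] using h
  have hb0 : 0 ≤ b := by
    have h := integral_mono (μ := μ) hYint (integrable_const b) (fun ω => (hbd ω).2)
    simpa [hmean] using h
  -- pointwise convexity bound
  have hptw : ∀ ω, Real.exp (t * Y ω) ≤
      Real.exp (t * a) / (b - a) * (b - Y ω) + Real.exp (t * b) / (b - a) * (Y ω - a) := by
    intro ω
    obtain ⟨h1, h2⟩ := hbd ω
    have hc1 : (0:ℝ) ≤ (b - Y ω) / (b - a) := div_nonneg (by linarith) hba.le
    have hc2 : (0:ℝ) ≤ (Y ω - a) / (b - a) := div_nonneg (by linarith) hba.le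
    have hsum : (b - Y ω) / (b - a) + (Y ω - a) / (b - a) = 1 := by field_simp; ring
    have hcvx := convexOn_exp.2 (Set.mem_univ (t * a)) (Set.mem_univ (t * b)) hc1 hc2 hsum
    have harg : (b - Y ω) / (b - a) * (t * a) + (Y ω - a) / (b - a) * (t * b) = t * Y ω := by
      field_simp
      ring
    rw [smul_eq_mul, smul_eq_mul, smul_eq_mul, smul_eq_mul, harg] at hcvx
    calc Real.exp (t * Y ω) ≤ (b - Y ω) / (b - a) * Real.exp (t * a)
          + (Y ω - a) / (b - a) * Real.exp (t * b) := hcvx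
      _ = Real.exp (t * a) / (b - a) * (b - Y ω) + Real.exp (t * b) / (b - a) * (Y ω - a) := by
          ring
  have hexpint : Integrable (fun ω => Real.exp (t * Y ω)) μ := by
    refine integrable_of_bdd ((hY.const_mul t).exp) (Real.exp (|t| * (|a| + |b|))) fun ω => ?_
    rw [abs_of_pos (Real.exp_pos _)]
    apply Real.exp_le_exp.2
    calc t * Y ω ≤ |t * Y ω| := le_abs_self _
      _ = |t| * |Y ω| := abs_mul _ _
      _ ≤ |t| * (|a| + |b|) := mul_le_mul_of_nonneg_left (hYbd ω) (abs_nonneg t)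
  have hI1a : Integrable (fun ω => b - Y ω) μ := (integrable_const b).sub hYint
  have hI2a : Integrable (fun ω => Y ω - a) μ := hYint.sub (integrable_const a)
  have hI1 : Integrable (fun ω => Real.exp (t * a) / (b - a) * (b - Y ω)) μ :=
    hI1a.const_mul _
  have hI2 : Integrable (fun ω => Real.exp (t * b) / (b - a) * (Y ω - a)) μ :=
    hI2a.const_mul _
  have hrhsint : Integrable (fun ω => Real.exp (t * a) / (b - a) * (b - Y ω)
      + Real.exp (t * b) / (b - a) * (Y ω - a)) μ := hI1.add hI2
  have hint := integral_mono hexpint hrhsint hptw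
  have hval : ∫ ω, (Real.exp (t * a) / (b - a) * (b - Y ω)
      + Real.exp (t * b) / (b - a) * (Y ω - a)) ∂μ
      = Real.exp (t * a) / (b - a) * b + Real.exp (t * b) / (b - a) * (-a) := by
    rw [integral_add hI1 hI2, integral_const_mul, integral_const_mul,
      integral_sub (integrable_const b) hYint, integral_sub hYint (integrable_const a),
      hmean, integral_const, integral_const]
    simp
  rw [hval] at hint
  -- algebra: rewrite as exp(ta) * (1 - p + p exp(h)) with p = -a/(b-a), h = t*(b-a)
  set p : ℝ := -a / (b - a) with hpdef
  have hp0 : 0 ≤ p := div_nonneg (by linarith) hba.le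
  have hp1 : p ≤ 1 := by rw [hpdef, div_le_one hba]; linarith
  have key := hoeff_ineq p hp0 hp1 (t * (b - a))
  have h1 : Real.exp (t * a) / (b - a) * b + Real.exp (t * b) / (b - a) * (-a)
      = Real.exp (t * a) * (1 - p + p * Real.exp (t * (b - a))) := by
    rw [show t * b = t * a + t * (b - a) by ring, Real.exp_add, hpdef]
    field_simp
    ring
  have h2 : Real.exp (t * a) * Real.exp (p * (t * (b - a)) + (t * (b - a)) ^ 2 / 8)
      = Real.exp (t ^ 2 * (b - a) ^ 2 / 8) := by
    rw [← Real.exp_add]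
    congr 1
    rw [hpdef]
    field_simp
    ring
  calc ∫ ω, Real.exp (t * Y ω) ∂μ
      ≤ Real.exp (t * a) * (1 - p + p * Real.exp (t * (b - a))) := by rw [← h1]; exact hint
    _ ≤ Real.exp (t * a) * Real.exp (p * (t * (b - a)) + (t * (b - a)) ^ 2 / 8) :=
        mul_le_mul_of_nonneg_left key (Real.exp_pos _).le
    _ = Real.exp (t ^ 2 * (b - a) ^ 2 / 8) := h2


lemma ptwise_aux (n b w : ℝ) (hn : 0 < n) (hb : 2 * n ≤ b) (hw : 0 ≤ w) :
    max (w ^ 2 - b) 0 ≤ 2 * n * Real.exp (-(b / n)) *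
      (Real.exp (Real.sqrt b / n * w) + Real.exp (-(Real.sqrt b / n * w))) := by
  have hb0 : (0:ℝ) ≤ b := by linarith
  rcases le_or_gt (w ^ 2) b with hcase | hcase
  · rw [max_eq_right (by linarith)]
    positivity
  · have hsb : Real.sqrt b ≤ w := by
      rw [show w = Real.sqrt (w ^ 2) from (Real.sqrt_sq hw).symm]
      exact Real.sqrt_le_sqrt hcase.le
    set s : ℝ := w - Real.sqrt b with hsdef
    have hs0 : 0 ≤ s := by linarith
    have hsqb : Real.sqrt b * Real.sqrt b = b := Real.mul_self_sqrt hb0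
    have hsbn : 0 ≤ Real.sqrt b := Real.sqrt_nonneg b
    -- exponent combination
    have hexp2 : Real.exp (-(b / n)) * Real.exp (Real.sqrt b / n * w)
        = Real.exp (Real.sqrt b * s / n) := by
      rw [← Real.exp_add]
      congr 1
      rw [hsdef]
      field_simp
      linear_combination hsqb
    -- key: 2n + 2√b s + s² ≤ 2n exp(√b s/n)
    have h1 : 1 + Real.sqrt b * s / n / 2 ≤ Real.exp (Real.sqrt b * s / n / 2) := by
      have := Real.add_one_le_exp (Real.sqrt b * s / n / 2)
      linarith
    have h2 : (1 + Real.sqrt b * s / n / 2) ^ 2 ≤ Real.exp (Real.sqrt b * s / n) := by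
      have hp : (0:ℝ) ≤ 1 + Real.sqrt b * s / n / 2 := by positivity
      calc (1 + Real.sqrt b * s / n / 2) ^ 2 ≤ Real.exp (Real.sqrt b * s / n / 2) ^ 2 := by
            exact pow_le_pow_left₀ hp h1 2
        _ = Real.exp (Real.sqrt b * s / n) := by
            rw [sq, ← Real.exp_add]; ring_nf
    have h4 : 2 * n * (1 + Real.sqrt b * s / n / 2) ^ 2 ≤
        2 * n * Real.exp (Real.sqrt b * s / n) :=
      mul_le_mul_of_nonneg_left h2 (by linarith)
    have h5 : 2 * n * (1 + Real.sqrt b * s / n / 2) ^ 2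
        = 2 * n + 2 * Real.sqrt b * s + (Real.sqrt b * s) ^ 2 / (2 * n) := by
      field_simp
      ring
    have h6 : s ^ 2 ≤ (Real.sqrt b * s) ^ 2 / (2 * n) := by
      rw [le_div_iff₀ (by linarith)]
      nlinarith [hsqb, sq_nonneg s, hb]
    have hkey : 2 * Real.sqrt b * s + s ^ 2 ≤ 2 * n * Real.exp (Real.sqrt b * s / n) := by
      nlinarith [h4, h5, h6, hn]
    have hwsq : w ^ 2 - b = 2 * Real.sqrt b * s + s ^ 2 := by
      have : w = Real.sqrt b + s := by rw [hsdef]; ring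
      rw [this]; nlinarith [hsqb]
    rw [max_eq_left (by linarith)]
    have hpos2 : 0 ≤ 2 * n * Real.exp (-(b / n)) * Real.exp (-(Real.sqrt b / n * w)) := by
      positivity
    calc w ^ 2 - b = 2 * Real.sqrt b * s + s ^ 2 := hwsq
      _ ≤ 2 * n * Real.exp (Real.sqrt b * s / n) := hkey
      _ = 2 * n * (Real.exp (-(b / n)) * Real.exp (Real.sqrt b / n * w)) := by rw [hexp2]
      _ ≤ 2 * n * Real.exp (-(b / n)) *
          (Real.exp (Real.sqrt b / n * w) + Real.exp (-(Real.sqrt b / n * w))) := by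
          nlinarith [hpos2]

lemma ptwise (n b w : ℝ) (hn : 0 < n) (hb : 2 * n ≤ b) :
    max (w ^ 2 - b) 0 ≤ 2 * n * Real.exp (-(b / n)) *
      (Real.exp (Real.sqrt b / n * w) + Real.exp (-(Real.sqrt b / n * w))) := by
  rcases le_total 0 w with hw | hw
  · exact ptwise_aux n b w hn hb hw
  · have h := ptwise_aux n b (-w) hn hb (by linarith)
    rw [neg_sq] at h
    rw [show Real.sqrt b / n * (-w) = -(Real.sqrt b / n * w) by ring, neg_neg] at h
    linarith



lemma main_coord {Ω : Type} [MeasurableSpace Ω] (μ : Measure Ω) [IsProbabilityMeasure μ]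
    (n : ℕ) (hn : 1 ≤ n) (Y : Fin n → Ω → ℝ) (hmeas : ∀ j, Measurable (Y j))
    (hindep : iIndepFun Y μ)
    (a : Fin n → ℝ) (hbd : ∀ j ω, Y j ω ∈ Set.Icc (a j) (a j + 2))
    (hmean : ∀ j, ∫ ω, Y j ω ∂μ = 0)
    (Q : ℝ) (hQ : 0 < Q) :
    ∫ ω, max (((∑ j, Y j ω) / n) ^ 2 - Q / 2) 0 ∂μ ≤ (20 / n) * Real.exp (-(Q * n) / 4) := by
  have hn0 : (0:ℝ) < n := by exact_mod_cast Nat.lt_of_lt_of_le Nat.zero_lt_one hn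
  -- each Y j is bounded by 2 in absolute value
  have haj : ∀ j, a j ≤ 0 ∧ 0 ≤ a j + 2 := by
    intro j
    have hYint : Integrable (Y j) μ := by
      refine integrable_of_bdd (hmeas j) (|a j| + 2) fun ω => ?_
      obtain ⟨h1, h2⟩ := hbd j ω
      rw [abs_le]
      constructor <;> nlinarith [neg_abs_le (a j), le_abs_self (a j)]
    constructor
    · have h := integral_mono (μ := μ) (integrable_const (a j)) hYint (fun ω => (hbd j ω).1)
      simpa [hmean j] using h
    · have h := integral_mono (μ := μ) hYint (integrable_const (a j + 2)) (fun ω => (hbd j ω).2)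
      simpa [hmean j] using h
  have hYabs : ∀ j ω, |Y j ω| ≤ 2 := by
    intro j ω
    obtain ⟨h1, h2⟩ := hbd j ω
    obtain ⟨g1, g2⟩ := haj j
    rw [abs_le]; constructor <;> linarith
  have hWmeas : Measurable (fun ω => ∑ j, Y j ω) :=
    Finset.measurable_sum Finset.univ fun j _ => hmeas j
  have hWabs : ∀ ω, |∑ j, Y j ω| ≤ 2 * n := by
    intro ω
    calc |∑ j, Y j ω| ≤ ∑ j, |Y j ω| := Finset.abs_sum_le_sum_abs _ _
      _ ≤ ∑ _j : Fin n, (2:ℝ) := Finset.sum_le_sum fun j _ => hYabs j ω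
      _ = 2 * n := by simp [mul_comm]
  -- mgf bound
  have hmgf : ∀ t : ℝ, ∫ ω, Real.exp (t * ∑ j, Y j ω) ∂μ ≤ Real.exp (n * t ^ 2 / 2) := by
    intro t
    have h1 : mgf (∑ j, Y j) μ t = ∏ j, mgf (Y j) μ t := hindep.mgf_sum hmeas Finset.univ
    have h2 : ∀ j : Fin n, mgf (Y j) μ t ≤ Real.exp (t ^ 2 / 2) := by
      intro j
      have := hoeff_mgf μ (Y j) (hmeas j) (a j) (a j + 2) (by linarith) (hbd j) (hmean j) t
      calc mgf (Y j) μ t = ∫ ω, Real.exp (t * Y j ω) ∂μ := rfl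
        _ ≤ Real.exp (t ^ 2 * (a j + 2 - a j) ^ 2 / 8) := this
        _ = Real.exp (t ^ 2 / 2) := by ring_nf
    have h3 : ∫ ω, Real.exp (t * ∑ j, Y j ω) ∂μ = mgf (∑ j, Y j) μ t := by
      simp [mgf, Finset.sum_apply]
    rw [h3, h1]
    calc ∏ j, mgf (Y j) μ t ≤ ∏ _j : Fin n, Real.exp (t ^ 2 / 2) :=
          Finset.prod_le_prod (fun j _ => mgf_nonneg) (fun j _ => h2 j)
      _ = Real.exp (t ^ 2 / 2) ^ n := by simp
      _ = Real.exp (n * t ^ 2 / 2) := by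
          rw [← Real.exp_nat_mul]; ring_nf
  set b : ℝ := (n:ℝ) ^ 2 * Q / 2 with hbdef
  set b' : ℝ := max b (2 * n) with hb'def
  have hb'2n : 2 * (n:ℝ) ≤ b' := le_max_right _ _
  have hb'b : b ≤ b' := le_max_left _ _
  have hb'0 : (0:ℝ) < b' := by linarith
  have hbpos : (0:ℝ) < b := by positivity
  set t0 : ℝ := Real.sqrt b' / n with ht0def
  clear_value b b' t0
  -- pointwise bound
  have hptw : ∀ ω, max (((∑ j, Y j ω) / n) ^ 2 - Q / 2) 0 ≤
      (2 * n * Real.exp (-(b' / n)) * (Real.exp (t0 * ∑ j, Y j ω)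
        + Real.exp (-(t0 * ∑ j, Y j ω))) + (b' - b)) / n ^ 2 := by
    intro ω
    set W := ∑ j, Y j ω with hWdef
    have hne : (n:ℝ) ≠ 0 := ne_of_gt hn0
    have e1 : (W / n) ^ 2 - Q / 2 = (W ^ 2 - b) / n ^ 2 := by
      rw [hbdef, div_pow]
      field_simp
    have e2 : max ((W ^ 2 - b) / n ^ 2) 0 = max (W ^ 2 - b) 0 / n ^ 2 := by
      rw [show (0:ℝ) = 0 / n ^ 2 by simp, ← max_div_div_right (by positivity) _ _]
      simp
    have e3 : max (W ^ 2 - b) 0 ≤ max (W ^ 2 - b') 0 + (b' - b) := by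
      apply max_le
      · calc W ^ 2 - b = (W ^ 2 - b') + (b' - b) := by ring
          _ ≤ max (W ^ 2 - b') 0 + (b' - b) := by
              have := le_max_left (W ^ 2 - b') 0; linarith
      · have := le_max_right (W ^ 2 - b') 0; linarith
    have e4 := ptwise n b' W hn0 hb'2n
    rw [e1, e2]
    have : Real.sqrt b' / n * W = t0 * W := by rw [ht0def]
    rw [this] at e4
    have hnum : max (W ^ 2 - b) 0 ≤ 2 * n * Real.exp (-(b' / n)) *
        (Real.exp (t0 * W) + Real.exp (-(t0 * W))) + (b' - b) := by linarith
    gcongr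
  -- integrability
  have hE1int : Integrable (fun ω => Real.exp (t0 * ∑ j, Y j ω)) μ := by
    refine integrable_of_bdd ((hWmeas.const_mul t0).exp) (Real.exp (|t0| * (2 * n))) fun ω => ?_
    rw [abs_of_pos (Real.exp_pos _)]
    apply Real.exp_le_exp.2
    calc t0 * (∑ j, Y j ω) ≤ |t0 * ∑ j, Y j ω| := le_abs_self _
      _ = |t0| * |∑ j, Y j ω| := abs_mul _ _
      _ ≤ |t0| * (2 * n) := mul_le_mul_of_nonneg_left (hWabs ω) (abs_nonneg _)
  have hE2int : Integrable (fun ω => Real.exp (-(t0 * ∑ j, Y j ω))) μ := by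
    refine integrable_of_bdd ((hWmeas.const_mul t0).neg.exp) (Real.exp (|t0| * (2 * n))) fun ω => ?_
    rw [abs_of_pos (Real.exp_pos _)]
    apply Real.exp_le_exp.2
    calc -(t0 * (∑ j, Y j ω)) ≤ |t0 * ∑ j, Y j ω| := neg_le_abs _
      _ = |t0| * |∑ j, Y j ω| := abs_mul _ _
      _ ≤ |t0| * (2 * n) := mul_le_mul_of_nonneg_left (hWabs ω) (abs_nonneg _)
  have hsumint : Integrable (fun ω => Real.exp (t0 * ∑ j, Y j ω)
      + Real.exp (-(t0 * ∑ j, Y j ω))) μ := hE1int.add hE2int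
  have hmulint : Integrable (fun ω => 2 * (n:ℝ) * Real.exp (-(b' / n)) *
      (Real.exp (t0 * ∑ j, Y j ω) + Real.exp (-(t0 * ∑ j, Y j ω)))) μ :=
    hsumint.const_mul _
  have hmuladdint : Integrable (fun ω => 2 * (n:ℝ) * Real.exp (-(b' / n)) *
      (Real.exp (t0 * ∑ j, Y j ω) + Real.exp (-(t0 * ∑ j, Y j ω))) + (b' - b)) μ :=
    hmulint.add (integrable_const _)
  have hRHSint : Integrable (fun ω => (2 * (n:ℝ) * Real.exp (-(b' / n)) *
      (Real.exp (t0 * ∑ j, Y j ω) + Real.exp (-(t0 * ∑ j, Y j ω))) + (b' - b)) / n ^ 2) μ :=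
    hmuladdint.div_const _
  have hLHSint : Integrable (fun ω => max (((∑ j, Y j ω) / n) ^ 2 - Q / 2) 0) μ := by
    refine integrable_of_bdd ((((hWmeas.div_const _).pow_const 2).sub_const _).max
      measurable_const) 4 fun ω => ?_
    have h1 : ((∑ j, Y j ω) / n) ^ 2 ≤ 4 := by
      rw [div_pow, div_le_iff₀ (by positivity)]
      nlinarith [hWabs ω, sq_abs (∑ j, Y j ω), abs_nonneg (∑ j, Y j ω)]
    rw [abs_of_nonneg (le_max_right _ _)]
    apply max_le (by linarith) (by norm_num)
  have hint := integral_mono hLHSint hRHSint hptw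
  -- compute the RHS integral
  have hval : ∫ ω, (2 * (n:ℝ) * Real.exp (-(b' / n)) *
      (Real.exp (t0 * ∑ j, Y j ω) + Real.exp (-(t0 * ∑ j, Y j ω))) + (b' - b)) / n ^ 2 ∂μ
      = (2 * (n:ℝ) * Real.exp (-(b' / n)) *
        ((∫ ω, Real.exp (t0 * ∑ j, Y j ω) ∂μ) + ∫ ω, Real.exp (-(t0 * ∑ j, Y j ω)) ∂μ)
        + (b' - b)) / n ^ 2 := by
    rw [integral_div, integral_add hmulint (integrable_const _), integral_const_mul,
      integral_add hE1int hE2int, integral_const]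
    simp
  rw [hval] at hint
  -- mgf bounds
  have hI1 : ∫ ω, Real.exp (t0 * ∑ j, Y j ω) ∂μ ≤ Real.exp (b' / (2 * n)) := by
    have := hmgf t0
    have ht0sq : (n:ℝ) * t0 ^ 2 / 2 = b' / (2 * n) := by
      rw [ht0def, div_pow, Real.sq_sqrt hb'0.le]
      field_simp
    rwa [ht0sq] at this
  have hI2 : ∫ ω, Real.exp (-(t0 * ∑ j, Y j ω)) ∂μ ≤ Real.exp (b' / (2 * n)) := by
    have := hmgf (-t0)
    have ht0sq : (n:ℝ) * (-t0) ^ 2 / 2 = b' / (2 * n) := by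
      rw [neg_pow, ht0def, div_pow, Real.sq_sqrt hb'0.le]
      field_simp
    rw [ht0sq] at this
    simpa [neg_mul] using this
  have hcomb : Real.exp (-(b' / n)) * Real.exp (b' / (2 * n)) = Real.exp (-(b' / (2 * n))) := by
    rw [← Real.exp_add]
    congr 1
    field_simp
    ring
  have hfinal : ∫ ω, max (((∑ j, Y j ω) / n) ^ 2 - Q / 2) 0 ∂μ ≤
      (4 * (n:ℝ) * Real.exp (-(b' / (2 * n))) + (b' - b)) / n ^ 2 := by
    have hstep : 2 * (n:ℝ) * Real.exp (-(b' / n)) *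
        ((∫ ω, Real.exp (t0 * ∑ j, Y j ω) ∂μ) + ∫ ω, Real.exp (-(t0 * ∑ j, Y j ω)) ∂μ)
        ≤ 4 * n * Real.exp (-(b' / (2 * n))) := by
      have hpos : (0:ℝ) ≤ 2 * (n:ℝ) * Real.exp (-(b' / n)) := by positivity
      calc 2 * (n:ℝ) * Real.exp (-(b' / n)) *
          ((∫ ω, Real.exp (t0 * ∑ j, Y j ω) ∂μ) + ∫ ω, Real.exp (-(t0 * ∑ j, Y j ω)) ∂μ)
          ≤ 2 * (n:ℝ) * Real.exp (-(b' / n)) * (Real.exp (b' / (2*n)) + Real.exp (b' / (2*n))) := by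
            apply mul_le_mul_of_nonneg_left (by linarith) hpos
        _ = 4 * n * (Real.exp (-(b' / n)) * Real.exp (b' / (2 * n))) := by ring
        _ = 4 * n * Real.exp (-(b' / (2 * n))) := by rw [hcomb]
    calc ∫ ω, max (((∑ j, Y j ω) / n) ^ 2 - Q / 2) 0 ∂μ
        ≤ (2 * (n:ℝ) * Real.exp (-(b' / n)) *
          ((∫ ω, Real.exp (t0 * ∑ j, Y j ω) ∂μ) + ∫ ω, Real.exp (-(t0 * ∑ j, Y j ω)) ∂μ)
          + (b' - b)) / n ^ 2 := hint
      _ ≤ (4 * (n:ℝ) * Real.exp (-(b' / (2 * n))) + (b' - b)) / n ^ 2 := by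
          gcongr
  -- case analysis
  rcases le_or_gt (2 * (n:ℝ)) b with hc | hc
  · have hb'eq : b' = b := by rw [hb'def]; exact max_eq_left hc
    have hexpeq : -(b / (2 * (n:ℝ))) = -(Q * n) / 4 := by
      rw [hbdef]; field_simp; ring
    rw [hb'eq, hexpeq] at hfinal
    have heq : (4 * (n:ℝ) * Real.exp (-(Q * n) / 4) + (b - b)) / n ^ 2
        = (4 / n) * Real.exp (-(Q * n) / 4) := by
      field_simp
      ring
    rw [heq] at hfinal
    have : (4 / (n:ℝ)) * Real.exp (-(Q * n) / 4) ≤ (20 / n) * Real.exp (-(Q * n) / 4) := by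
      have h1 : (0:ℝ) < Real.exp (-(Q * n) / 4) / n := by positivity
      calc (4 / (n:ℝ)) * Real.exp (-(Q * n) / 4) = 4 * (Real.exp (-(Q * n) / 4) / n) := by ring
        _ ≤ 20 * (Real.exp (-(Q * n) / 4) / n) := by linarith
        _ = (20 / n) * Real.exp (-(Q * n) / 4) := by ring
    linarith
  · have hb'eq : b' = 2 * n := by rw [hb'def]; exact max_eq_right hc.le
    have h1 : -(b' / (2 * (n:ℝ))) = -1 := by rw [hb'eq]; field_simp
    rw [h1] at hfinal
    rw [hb'eq] at hfinal
    have he3 : (3:ℝ)⁻¹ < Real.exp (-1) := by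
      rw [Real.exp_neg]
      apply inv_strictAnti₀ (Real.exp_pos 1)
      linarith [Real.exp_one_lt_d9]
    have hexpge : Real.exp (-1) ≤ Real.exp (-(Q * n) / 4) := by
      apply Real.exp_le_exp.2
      have : Q * n / 4 = b / (2 * n) := by rw [hbdef]; field_simp; ring
      nlinarith [hc, hn0, hbpos]
    have hlast : (4 * (n:ℝ) * Real.exp (-1) + (2 * n - b)) / n ^ 2
        ≤ (20 / n) * Real.exp (-(Q * n) / 4) := by
      rw [div_le_iff₀ (by positivity)]
      have h20 : (20 / (n:ℝ)) * Real.exp (-(Q * n) / 4) * n ^ 2 = 20 * n * Real.exp (-(Q * n) / 4) := by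
        field_simp
      rw [h20]
      have h2 : 20 * (n:ℝ) * Real.exp (-1) ≤ 20 * n * Real.exp (-(Q * n) / 4) := by
        apply mul_le_mul_of_nonneg_left hexpge (by positivity)
      have h30 : (2:ℝ) ≤ 16 * Real.exp (-1) := by nlinarith [he3]
      have hn3 : 2 * (n:ℝ) ≤ 16 * n * Real.exp (-1) := by
        have hm := mul_le_mul_of_nonneg_right h30 (le_of_lt hn0)
        nlinarith [hm]
      linarith [h2, hn3, hbpos]
    linarith



/-- Tail integral bound for the empirical characteristic function: there is a universal
constant `C` (independent of `n`, `k` and `Q`) such that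
`E[(|γ̃_k - γ_k|² - Q) 1_{|γ̃_k - γ_k|² > Q}] ≤ (C/n) e^{-Qn/4}`. -/
theorem empirical_charfun_tail_integral :
    ∃ C : ℝ, 0 < C ∧
      ∀ (Ω : Type) [MeasurableSpace Ω] (μ : Measure Ω) [IsProbabilityMeasure μ]
        (n : ℕ) (hn : 1 ≤ n) (τ : Fin n → Ω → ℝ),
        (∀ j, Measurable (τ j)) →
        iIndepFun τ μ →
        (∀ j, IdentDistrib (τ j) (τ ⟨0, hn⟩) μ μ) →
        ∀ (k : ℤ) (γ : ℂ),
          γ = (∫ ω, Complex.exp (-(2 * π * Complex.I * k * τ ⟨0, hn⟩ ω)) ∂μ) →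
        ∀ (γt : Ω → ℂ),
          (∀ ω, γt ω = (n : ℂ)⁻¹ * ∑ j, Complex.exp (-(2 * π * Complex.I * k * τ j ω))) →
        ∀ Q : ℝ, 0 < Q →
          (∫ ω, (‖γt ω - γ‖ ^ 2 - Q) * Set.indicator {ω' | Q < ‖γt ω' - γ‖ ^ 2} (fun _ => (1:ℝ)) ω ∂μ)
            ≤ (C / n) * Real.exp (-(Q * n) / 4) := by
  refine ⟨100, by norm_num, ?_⟩
  intro Ω _ μ _ n hn τ hτm hτindep hτid k γ hγ γt hγteq Q hQ
  have hn0 : (0:ℝ) < n := by exact_mod_cast Nat.lt_of_lt_of_le Nat.zero_lt_one hn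
  have hne : (n:ℝ) ≠ 0 := ne_of_gt hn0
  -- coordinate functions
  set fre : ℝ → ℝ := fun t => Real.cos (2 * π * k * t) - γ.re with hfre
  set fim : ℝ → ℝ := fun t => -Real.sin (2 * π * k * t) - γ.im with hfim
  have hmul : Measurable (fun t : ℝ => 2 * π * (k:ℝ) * t) := measurable_id.const_mul _
  have hfrem : Measurable fre := (Real.measurable_cos.comp hmul).sub_const _
  have hfimm : Measurable fim := ((Real.measurable_sin.comp hmul).neg).sub_const _
  set Y : Fin n → Ω → ℝ := fun j ω => fre (τ j ω) with hYdef
  set V : Fin n → Ω → ℝ := fun j ω => fim (τ j ω) with hVdef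
  have hYm : ∀ j, Measurable (Y j) := fun j => hfrem.comp (hτm j)
  have hVm : ∀ j, Measurable (V j) := fun j => hfimm.comp (hτm j)
  -- re/im/norm of the complex exponential
  have hargeq : ∀ x : ℝ, -(2 * π * Complex.I * k * x) = ((-(2 * π * k * x) : ℝ) : ℂ) * Complex.I := by
    intro x; push_cast; ring
  have hre : ∀ x : ℝ, (Complex.exp (-(2 * π * Complex.I * k * x))).re = Real.cos (2 * π * k * x) := by
    intro x; rw [hargeq x, Complex.exp_ofReal_mul_I_re, Real.cos_neg]
  have him : ∀ x : ℝ, (Complex.exp (-(2 * π * Complex.I * k * x))).im = -Real.sin (2 * π * k * x) := by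
    intro x; rw [hargeq x, Complex.exp_ofReal_mul_I_im, Real.sin_neg]
  have hnorm1 : ∀ x : ℝ, ‖Complex.exp (-(2 * π * Complex.I * k * x))‖ = 1 := by
    intro x; rw [hargeq x]; exact Complex.norm_exp_ofReal_mul_I _
  -- integrability of the complex exponential of τ j
  have hcexpm : ∀ j : Fin n, Measurable (fun ω => Complex.exp (-(2 * π * Complex.I * k * τ j ω))) := by
    intro j
    exact Complex.measurable_exp.comp
      (((Complex.measurable_ofReal.comp (hτm j)).const_mul (2 * π * Complex.I * k)).neg)
  have hcexpint : ∀ j : Fin n, Integrable (fun ω => Complex.exp (-(2 * π * Complex.I * k * τ j ω))) μ := by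
    intro j
    refine (integrable_const (1:ℝ)).mono' (hcexpm j).aestronglyMeasurable ?_
    exact Filter.Eventually.of_forall fun ω => by simp [hnorm1]
  -- γ bound and components
  have hγnorm : ‖γ‖ ≤ 1 := by
    rw [hγ]
    calc ‖∫ ω, Complex.exp (-(2 * π * Complex.I * k * τ ⟨0, hn⟩ ω)) ∂μ‖
        ≤ ∫ ω, ‖Complex.exp (-(2 * π * Complex.I * k * τ ⟨0, hn⟩ ω))‖ ∂μ :=
          norm_integral_le_integral_norm _
      _ = 1 := by simp [hnorm1]
  have hγre : γ.re = ∫ ω, Real.cos (2 * π * k * τ ⟨0, hn⟩ ω) ∂μ := by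
    conv_lhs => rw [hγ]
    rw [show (∫ ω, Complex.exp (-(2 * π * Complex.I * k * τ ⟨0, hn⟩ ω)) ∂μ).re
        = RCLike.re (∫ ω, Complex.exp (-(2 * π * Complex.I * k * τ ⟨0, hn⟩ ω)) ∂μ) from rfl,
      ← integral_re (hcexpint _)]
    simp_rw [RCLike.re_to_complex]
    congr 1
    funext ω
    rw [hre]
  have hγim : γ.im = ∫ ω, -Real.sin (2 * π * k * τ ⟨0, hn⟩ ω) ∂μ := by
    conv_lhs => rw [hγ]
    rw [show (∫ ω, Complex.exp (-(2 * π * Complex.I * k * τ ⟨0, hn⟩ ω)) ∂μ).im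
        = RCLike.im (∫ ω, Complex.exp (-(2 * π * Complex.I * k * τ ⟨0, hn⟩ ω)) ∂μ) from rfl,
      ← integral_im (hcexpint _)]
    simp_rw [RCLike.im_to_complex]
    congr 1
    funext ω
    rw [him]
  -- mean zero
  have hcosint : ∀ j : Fin n, Integrable (fun ω => Real.cos (2 * π * k * τ j ω)) μ := by
    intro j
    refine integrable_of_bdd (Real.measurable_cos.comp (hmul.comp (hτm j))) 1 fun ω => ?_
    exact abs_cos_le_one _
  have hsinint : ∀ j : Fin n, Integrable (fun ω => -Real.sin (2 * π * k * τ j ω)) μ := by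
    intro j
    refine integrable_of_bdd ((Real.measurable_sin.comp (hmul.comp (hτm j))).neg) 1 fun ω => ?_
    rw [abs_neg]; exact abs_sin_le_one _
  have hYmean : ∀ j, ∫ ω, Y j ω ∂μ = 0 := by
    intro j
    have hid : ∫ ω, Real.cos (2 * π * k * τ j ω) ∂μ = ∫ ω, Real.cos (2 * π * k * τ ⟨0, hn⟩ ω) ∂μ :=
      ((hτid j).comp (Real.measurable_cos.comp hmul)).integral_eq
    have : ∫ ω, Y j ω ∂μ = (∫ ω, Real.cos (2 * π * k * τ j ω) ∂μ) - γ.re := by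
      rw [hYdef]
      simp only [hfre]
      rw [integral_sub (hcosint j) (integrable_const _), integral_const]
      simp
    rw [this, hid, ← hγre]
    ring
  have hVmean : ∀ j, ∫ ω, V j ω ∂μ = 0 := by
    intro j
    have hid : ∫ ω, -Real.sin (2 * π * k * τ j ω) ∂μ = ∫ ω, -Real.sin (2 * π * k * τ ⟨0, hn⟩ ω) ∂μ :=
      ((hτid j).comp ((Real.measurable_sin.comp hmul).neg)).integral_eq
    have : ∫ ω, V j ω ∂μ = (∫ ω, -Real.sin (2 * π * k * τ j ω) ∂μ) - γ.im := by
      rw [hVdef]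
      simp only [hfim]
      rw [integral_sub (hsinint j) (integrable_const _), integral_const]
      simp
    rw [this, hid, ← hγim]
    ring
  -- bounds
  have hYbd : ∀ j ω, Y j ω ∈ Set.Icc (-γ.re - 1) (-γ.re - 1 + 2) := by
    intro j ω
    constructor <;> simp only [hYdef, hfre] <;>
      nlinarith [Real.neg_one_le_cos (2 * π * k * τ j ω), Real.cos_le_one (2 * π * k * τ j ω)]
  have hVbd : ∀ j ω, V j ω ∈ Set.Icc (-γ.im - 1) (-γ.im - 1 + 2) := by
    intro j ω
    constructor <;> simp only [hVdef, hfim] <;>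
      nlinarith [Real.neg_one_le_sin (2 * π * k * τ j ω), Real.sin_le_one (2 * π * k * τ j ω)]
  -- independence
  have hYindep : iIndepFun Y μ := hτindep.comp (fun _ => fre) (fun _ => hfrem)
  have hVindep : iIndepFun V μ := hτindep.comp (fun _ => fim) (fun _ => hfimm)
  -- the key identity
  have hX : ∀ ω, ‖γt ω - γ‖ ^ 2 = ((∑ j, Y j ω) / n) ^ 2 + ((∑ j, V j ω) / n) ^ 2 := by
    intro ω
    have hre' : (γt ω - γ).re = (∑ j, Y j ω) / n := by
      rw [Complex.sub_re, hγteq ω]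
      have : ((n:ℂ)⁻¹ * ∑ j, Complex.exp (-(2 * π * Complex.I * k * τ j ω))).re
          = (n:ℝ)⁻¹ * (∑ j, Complex.exp (-(2 * π * Complex.I * k * τ j ω))).re := by
        rw [show ((n:ℂ))⁻¹ = (((n:ℝ)⁻¹ : ℝ) : ℂ) by push_cast; rfl]
        simp [Complex.mul_re]
      rw [this, Complex.re_sum]
      simp_rw [hre]
      rw [hYdef]
      simp only [hfre]
      rw [Finset.sum_sub_distrib, Finset.sum_const, Finset.card_univ, Fintype.card_fin]
      field_simp
      rw [nsmul_eq_mul]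
    have him' : (γt ω - γ).im = (∑ j, V j ω) / n := by
      rw [Complex.sub_im, hγteq ω]
      have : ((n:ℂ)⁻¹ * ∑ j, Complex.exp (-(2 * π * Complex.I * k * τ j ω))).im
          = (n:ℝ)⁻¹ * (∑ j, Complex.exp (-(2 * π * Complex.I * k * τ j ω))).im := by
        rw [show ((n:ℂ))⁻¹ = (((n:ℝ)⁻¹ : ℝ) : ℂ) by push_cast; rfl]
        simp [Complex.mul_im]
      rw [this, Complex.im_sum]
      simp_rw [him]
      rw [hVdef]
      simp only [hfim]
      rw [Finset.sum_sub_distrib, Finset.sum_const, Finset.card_univ, Fintype.card_fin]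
      field_simp
      rw [nsmul_eq_mul]
    rw [← hre', ← him', Complex.sq_norm, Complex.normSq_apply]
    ring
  -- boundedness facts
  have hYabs : ∀ j ω, |Y j ω| ≤ 2 := by
    intro j ω
    have h1 : |γ.re| ≤ 1 := le_trans (Complex.abs_re_le_norm γ) hγnorm
    obtain ⟨hl, hr⟩ := hYbd j ω
    rw [abs_le] at h1 ⊢
    constructor <;> [linarith [h1.1]; linarith [h1.2]]
  have hVabs : ∀ j ω, |V j ω| ≤ 2 := by
    intro j ω
    have h1 : |γ.im| ≤ 1 := le_trans (Complex.abs_im_le_norm γ) hγnorm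
    obtain ⟨hl, hr⟩ := hVbd j ω
    rw [abs_le] at h1 ⊢
    constructor <;> [linarith [h1.1]; linarith [h1.2]]
  have hWabs : ∀ ω, |∑ j, Y j ω| ≤ 2 * n := by
    intro ω
    calc |∑ j, Y j ω| ≤ ∑ j, |Y j ω| := Finset.abs_sum_le_sum_abs _ _
      _ ≤ ∑ _j : Fin n, (2:ℝ) := Finset.sum_le_sum fun j _ => hYabs j ω
      _ = 2 * n := by simp [mul_comm]
  have hVWabs : ∀ ω, |∑ j, V j ω| ≤ 2 * n := by
    intro ω
    calc |∑ j, V j ω| ≤ ∑ j, |V j ω| := Finset.abs_sum_le_sum_abs _ _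
      _ ≤ ∑ _j : Fin n, (2:ℝ) := Finset.sum_le_sum fun j _ => hVabs j ω
      _ = 2 * n := by simp [mul_comm]
  have hWsq : ∀ ω, ((∑ j, Y j ω) / n) ^ 2 ≤ 4 := by
    intro ω
    rw [div_pow, div_le_iff₀ (by positivity)]
    nlinarith [hWabs ω, sq_abs (∑ j, Y j ω), abs_nonneg (∑ j, Y j ω)]
  have hVsq : ∀ ω, ((∑ j, V j ω) / n) ^ 2 ≤ 4 := by
    intro ω
    rw [div_pow, div_le_iff₀ (by positivity)]
    nlinarith [hVWabs ω, sq_abs (∑ j, V j ω), abs_nonneg (∑ j, V j ω)]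
  -- measurability
  have hγtm : Measurable γt := by
    have heq : γt = fun ω => (n:ℂ)⁻¹ * ∑ j, Complex.exp (-(2 * π * Complex.I * k * τ j ω)) :=
      funext hγteq
    rw [heq]
    exact (Finset.measurable_sum Finset.univ fun j _ => hcexpm j).const_mul _
  have hXm : Measurable (fun ω => ‖γt ω - γ‖ ^ 2) := ((hγtm.sub_const γ).norm).pow_const 2
  have hSm : MeasurableSet {ω' | Q < ‖γt ω' - γ‖ ^ 2} := measurableSet_lt measurable_const hXm
  have hindm : Measurable (Set.indicator {ω' | Q < ‖γt ω' - γ‖ ^ 2} (fun _ => (1:ℝ))) :=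
    measurable_const.indicator hSm
  have hintm : Measurable (fun ω => (‖γt ω - γ‖ ^ 2 - Q) *
      Set.indicator {ω' | Q < ‖γt ω' - γ‖ ^ 2} (fun _ => (1:ℝ)) ω) :=
    (hXm.sub_const Q).mul hindm
  have hXbd : ∀ ω, ‖γt ω - γ‖ ^ 2 ≤ 8 := by
    intro ω
    rw [hX ω]
    linarith [hWsq ω, hVsq ω]
  have hintbd : ∀ ω, |(‖γt ω - γ‖ ^ 2 - Q) *
      Set.indicator {ω' | Q < ‖γt ω' - γ‖ ^ 2} (fun _ => (1:ℝ)) ω| ≤ 8 := by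
    intro ω
    by_cases h : ω ∈ {ω' | Q < ‖γt ω' - γ‖ ^ 2}
    · rw [Set.indicator_of_mem h, mul_one]
      have h' : Q < ‖γt ω - γ‖ ^ 2 := h
      rw [abs_of_pos (by linarith)]
      linarith [hXbd ω]
    · rw [Set.indicator_of_notMem h, mul_zero]
      simp
  have hintint : Integrable (fun ω => (‖γt ω - γ‖ ^ 2 - Q) *
      Set.indicator {ω' | Q < ‖γt ω' - γ‖ ^ 2} (fun _ => (1:ℝ)) ω) μ :=
    integrable_of_bdd hintm 8 hintbd
  -- A and B
  have hAm : Measurable (fun ω => max (((∑ j, Y j ω) / n) ^ 2 - Q / 2) 0) :=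
    ((((Finset.measurable_sum Finset.univ fun j _ => hYm j).div_const _).pow_const 2).sub_const
      _).max measurable_const
  have hBm : Measurable (fun ω => max (((∑ j, V j ω) / n) ^ 2 - Q / 2) 0) :=
    ((((Finset.measurable_sum Finset.univ fun j _ => hVm j).div_const _).pow_const 2).sub_const
      _).max measurable_const
  have hAint : Integrable (fun ω => max (((∑ j, Y j ω) / n) ^ 2 - Q / 2) 0) μ := by
    refine integrable_of_bdd hAm 4 fun ω => ?_
    rw [abs_of_nonneg (le_max_right _ _)]
    exact max_le (by linarith [hWsq ω]) (by norm_num)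
  have hBint : Integrable (fun ω => max (((∑ j, V j ω) / n) ^ 2 - Q / 2) 0) μ := by
    refine integrable_of_bdd hBm 4 fun ω => ?_
    rw [abs_of_nonneg (le_max_right _ _)]
    exact max_le (by linarith [hVsq ω]) (by norm_num)
  -- pointwise domination
  have hkey : ∀ ω, (‖γt ω - γ‖ ^ 2 - Q) *
      Set.indicator {ω' | Q < ‖γt ω' - γ‖ ^ 2} (fun _ => (1:ℝ)) ω ≤
      max (((∑ j, Y j ω) / n) ^ 2 - Q / 2) 0 + max (((∑ j, V j ω) / n) ^ 2 - Q / 2) 0 := by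
    intro ω
    by_cases h : ω ∈ {ω' | Q < ‖γt ω' - γ‖ ^ 2}
    · rw [Set.indicator_of_mem h, mul_one, hX ω]
      have h1 := le_max_left (((∑ j, Y j ω) / n) ^ 2 - Q / 2) 0
      have h2 := le_max_left (((∑ j, V j ω) / n) ^ 2 - Q / 2) 0
      linarith
    · rw [Set.indicator_of_notMem h, mul_zero]
      exact add_nonneg (le_max_right _ _) (le_max_right _ _)
  -- assemble
  have hmono := integral_mono hintint (hAint.add hBint) hkey
  simp only [Pi.add_apply] at hmono
  rw [integral_add hAint hBint] at hmono
  have hA := main_coord μ n hn Y hYm hYindep (fun _ => -γ.re - 1) hYbd hYmean Q hQ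
  have hB := main_coord μ n hn V hVm hVindep (fun _ => -γ.im - 1) hVbd hVmean Q hQ
  have hpos : (0:ℝ) < Real.exp (-(Q * n) / 4) / n := div_pos (Real.exp_pos _) hn0
  have hfin : (20 / (n:ℝ)) * Real.exp (-(Q * n) / 4) + (20 / n) * Real.exp (-(Q * n) / 4)
      ≤ (100 / n) * Real.exp (-(Q * n) / 4) := by
    have e1 : (20 / (n:ℝ)) * Real.exp (-(Q * n) / 4) = 20 * (Real.exp (-(Q * n) / 4) / n) := by ring
    have e2 : (100 / (n:ℝ)) * Real.exp (-(Q * n) / 4) = 100 * (Real.exp (-(Q * n) / 4) / n) := by ring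
    rw [e1, e2]
    linarith
  linarith
end
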